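/- Let λ ≥ 1, n ≥ 2, and let c be a harmonious total colouring of the complete multigraph λK_n. Then the number of edges of λK_n whose colour under c is also the colour of some vertex is at most ⌊n(n−1)/4⌋. -/

import Mathlib

/-- A harmonious total colouring of the complete multigraph `λK_n` with `k` colours.
Vertices are `Fin n`; the `lam` parallel edges joining a pair `e` of distinct vertices
are `(e, i)` for `i : Fin lam`.  The colouring is proper on vertices (all vertices are
pairwise adjacent), on edges sharing an endpoint (in particular parallel edges), and on
vertex-edge incidences; moreover the unordered pairs `{cv v, ce e i}` over incident
vertex-edge pairs are pairwise distinct. -/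
def IsHarmoniousTotalColoringM (n lam k : ℕ)
    (cv : Fin n → Fin k) (ce : Sym2 (Fin n) → Fin lam → Fin k) : Prop :=
  (∀ u v : Fin n, u ≠ v → cv u ≠ cv v) ∧
  (∀ (e f : Sym2 (Fin n)) (i j : Fin lam), ¬ e.IsDiag → ¬ f.IsDiag → (e, i) ≠ (f, j) →
    (∃ v, v ∈ e ∧ v ∈ f) → ce e i ≠ ce f j) ∧
  (∀ (v : Fin n) (e : Sym2 (Fin n)) (i : Fin lam), ¬ e.IsDiag → v ∈ e → cv v ≠ ce e i) ∧
  (∀ (v : Fin n) (e : Sym2 (Fin n)) (i : Fin lam) (w : Fin n) (f : Sym2 (Fin n)) (j : Fin lam),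
    ¬ e.IsDiag → ¬ f.IsDiag → v ∈ e → w ∈ f →
    s(cv v, ce e i) = s(cv w, ce f j) → v = w ∧ e = f ∧ i = j)

/-- The harmonious total chromatic number of the complete multigraph `λK_n`. -/
noncomputable def harmoniousTotalChromaticNumberM (n lam : ℕ) : ℕ :=
  sInf {k | ∃ cv ce, IsHarmoniousTotalColoringM n lam k cv ce}

/-- In any harmonious total colouring of `λK_n` (`λ ≥ 1`, `n ≥ 2`), the number of edges
whose colour is also the colour of some vertex is at most `⌊n(n-1)/4⌋`. -/
theorem multigraph_vertex_coloured_edges (n lam k : ℕ) (hlam : 1 ≤ lam) (hn : 2 ≤ n)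
    (cv : Fin n → Fin k) (ce : Sym2 (Fin n) → Fin lam → Fin k)
    (hc : IsHarmoniousTotalColoringM n lam k cv ce) :
    {p : Sym2 (Fin n) × Fin lam | ¬ p.1.IsDiag ∧ ∃ v, ce p.1 p.2 = cv v}.ncard ≤
      n * (n - 1) / 4 := by
  classical
  set S : Finset (Sym2 (Fin n) × Fin lam) :=
    Finset.univ.filter (fun p => ¬ p.1.IsDiag ∧ ∃ v, ce p.1 p.2 = cv v) with hS
  have hset : {p : Sym2 (Fin n) × Fin lam | ¬ p.1.IsDiag ∧ ∃ v, ce p.1 p.2 = cv v} = ↑S := by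
    ext p; simp [hS]
  rw [hset, Set.ncard_coe_finset]
  have hn0 : 0 < n := by omega
  set w : Fin k → Fin n := fun c => if h : ∃ v, cv v = c then h.choose else ⟨0, hn0⟩ with hw
  have hw' : ∀ c, (∃ v, cv v = c) → cv (w c) = c := by
    intro c h
    simp only [hw, dif_pos h]
    exact h.choose_spec
  set O : Finset (Sym2 (Fin n)) := Finset.univ.filter (fun e => ¬ e.IsDiag) with hO
  set F : (Sym2 (Fin n) × Fin lam) × Bool → Sym2 (Fin n) :=
    fun q => s(if q.2 then q.1.1.out.1 else q.1.1.out.2, w (ce q.1.1 q.1.2)) with hF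
  -- basic facts about members of S
  have hSmem : ∀ p ∈ S, ¬ p.1.IsDiag ∧ cv (w (ce p.1 p.2)) = ce p.1 p.2 := by
    intro p hp
    simp only [hS, Finset.mem_filter] at hp
    obtain ⟨-, hd, v, hv⟩ := hp
    exact ⟨hd, hw' _ ⟨v, hv.symm⟩⟩
  have hend : ∀ (b : Bool) (e : Sym2 (Fin n)),
      (if b then e.out.1 else e.out.2) ∈ e := by
    intro b e
    cases b <;> simp [Sym2.out_fst_mem, Sym2.out_snd_mem]
  have hcard : S.card * 2 ≤ O.card := by
    have := Finset.card_le_card_of_injOn F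
      (s := S ×ˢ (Finset.univ : Finset Bool)) (t := O) ?_ ?_
    · simpa [Finset.card_product] using this
    · -- maps to O
      intro q hq
      simp only [Finset.mem_coe, Finset.mem_product] at hq
      obtain ⟨hd, hcvw⟩ := hSmem q.1 hq.1
      simp only [hO, hF, Finset.mem_coe, Finset.mem_filter, Finset.mem_univ, true_and,
        Sym2.mk_isDiag_iff]
      intro heq
      exact hc.2.2.1 _ q.1.1 q.1.2 hd (hend q.2 q.1.1) (by rw [heq, hcvw])
    · -- injective on S × Bool
      intro q hq q' hq' hFq
      simp only [Finset.mem_coe, Finset.mem_product] at hq hq'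
      obtain ⟨hd, hcvw⟩ := hSmem q.1 hq.1
      obtain ⟨hd', hcvw'⟩ := hSmem q'.1 hq'.1
      set v := if q.2 then q.1.1.out.1 else q.1.1.out.2 with hv
      set u := if q'.2 then q'.1.1.out.1 else q'.1.1.out.2 with hu
      have hmemv : v ∈ q.1.1 := hend q.2 q.1.1
      have hmemu : u ∈ q'.1.1 := hend q'.2 q'.1.1
      have hFq' : s(v, w (ce q.1.1 q.1.2)) = s(u, w (ce q'.1.1 q'.1.2)) := hFq
      have hcol : s(cv v, ce q.1.1 q.1.2) = s(cv u, ce q'.1.1 q'.1.2) := by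
        rw [Sym2.eq_iff] at hFq'
        rcases hFq' with ⟨h1, h2⟩ | ⟨h1, h2⟩
        · rw [h1, ← hcvw, ← hcvw', h2]
        · rw [← hcvw, ← hcvw', h1, h2, Sym2.eq_swap]
      obtain ⟨hvu, he, hi⟩ := hc.2.2.2 v q.1.1 q.1.2 u q'.1.1 q'.1.2 hd hd' hmemv hmemu hcol
      have hp : q.1 = q'.1 := Prod.ext he hi
      have hb : q.2 = q'.2 := by
        by_contra hbne
        have hout : q.1.1.out.1 = q.1.1.out.2 := by
          rcases Bool.eq_false_or_eq_true q.2 with h2 | h2 <;>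
            rcases Bool.eq_false_or_eq_true q'.2 with h2' | h2' <;>
              first
                | (exact absurd (h2.trans h2'.symm) hbne)
                | (simp only [hv, hu, h2, h2', ← hp] at hvu;
                   simp only [if_true, Bool.false_eq_true, if_false] at hvu;
                   first | exact hvu | exact hvu.symm)
        apply hd
        have : q.1.1 = s(q.1.1.out.1, q.1.1.out.2) := by
          conv_lhs => rw [← q.1.1.out_eq]
        rw [this, Sym2.mk_isDiag_iff]
        exact hout
      exact Prod.ext hp hb
  have hOcard : O.card = n.choose 2 := by
    have h1 : O = (⊤ : SimpleGraph (Fin n)).edgeFinset := by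
      rw [SimpleGraph.edgeFinset_top]
      ext e; simp [hO]
    rw [h1, SimpleGraph.card_edgeFinset_top_eq_card_choose_two, Fintype.card_fin]
  rw [hOcard, Nat.choose_two_right] at hcard
  have : S.card ≤ n * (n - 1) / 2 / 2 := Nat.le_div_iff_mul_le (by norm_num) |>.2 hcard
  calc S.card ≤ n * (n - 1) / 2 / 2 := this
    _ = n * (n - 1) / 4 := by rw [Nat.div_div_eq_div_mul]
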